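/- (Abstract orthotropic Orlicz stability.) Let φ be an N-function such that both φ and its complementary function φ* satisfy the Δ₂-condition with constant D. Let T ⊆ N ⊂ ℝ^d be measurable sets with 0 < |T| ≤ |N| < ∞. Let g, f : ℝ^d → ℝ be measurable with f integrable on N and g integrable on T, and suppose: (i) there is M > 0 with |g(x)| ≤ M ⨍_T |g| dz for almost every x ∈ T (an inverse estimate, valid e.g. when g is a polynomial of fixed degree on a shape-regular cell); and (ii) ⨍_T |g| dx ≤ M' ⨍_N |f| dx. Then there is a constant C, depending only on D, M, M' (and in particular independent of the shift a), such that for all a ≥ 0: ⨍_T φ_a(|g|) dx ≤ C ⨍_N φ_a(|f|) dx, where φ_a is the shifted N-function and ⨍ denotes the average integral. -/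

import Mathlib

open MeasureTheory

/-- An N-function `Φ` with derivative `Φ'`: differentiable on `[0,∞)` with
`Φ(0) = 0`, `Φ(t) = ∫₀ᵗ Φ'(s) ds`, `Φ'` nondecreasing, right-continuous,
`Φ'(0) = 0` and `Φ'(t) > 0` for `t > 0`. -/
structure IsNFunction (Φ Φ' : ℝ → ℝ) : Prop where
  map_zero : Φ 0 = 0
  eq_integral : ∀ t : ℝ, 0 ≤ t → Φ t = ∫ s in (0:ℝ)..t, Φ' s
  deriv_zero : Φ' 0 = 0
  deriv_pos : ∀ t : ℝ, 0 < t → 0 < Φ' t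
  deriv_mono : MonotoneOn Φ' (Set.Ici 0)
  deriv_rightCont : ∀ t : ℝ, 0 ≤ t → ContinuousWithinAt Φ' (Set.Ici t) t

/-- The Δ₂-condition with constant `D`. -/
def Delta2 (Φ : ℝ → ℝ) (D : ℝ) : Prop := ∀ t : ℝ, 0 < t → Φ (2 * t) ≤ D * Φ t

/-- Derivative of the shifted N-function: `Φ_a'(t) = (t/(a+t)) Φ'(a+t)`. -/
noncomputable def shiftDeriv (Φ' : ℝ → ℝ) (a t : ℝ) : ℝ := t / (a + t) * Φ' (a + t)

/-- The shifted N-function `Φ_a(t) = ∫₀ᵗ (s/(a+s)) Φ'(a+s) ds`. -/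
noncomputable def shiftN (Φ' : ℝ → ℝ) (a t : ℝ) : ℝ := ∫ s in (0:ℝ)..t, shiftDeriv Φ' a s

/-- The (generalized) inverse `(Φ')⁻¹(t) = sup {s ≥ 0 : Φ'(s) ≤ t}`. -/
noncomputable def invDeriv (Φ' : ℝ → ℝ) (t : ℝ) : ℝ := sSup {s : ℝ | 0 ≤ s ∧ Φ' s ≤ t}

/-- The complementary N-function `Φ*(t) = ∫₀ᵗ (Φ')⁻¹(s) ds`. -/
noncomputable def complementary (Φ' : ℝ → ℝ) (t : ℝ) : ℝ := ∫ s in (0:ℝ)..t, invDeriv Φ' s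

section helpers
variable {h : ℝ → ℝ}

lemma my_intInt (hm : MonotoneOn h (Set.Ici 0)) {x y : ℝ} (hx : 0 ≤ x) (hxy : x ≤ y) :
    IntervalIntegrable h volume x y := by
  apply MonotoneOn.intervalIntegrable
  apply hm.mono
  rw [Set.uIcc_of_le hxy]
  exact fun z hz => le_trans hx hz.1

lemma my_le_primitive (hm : MonotoneOn h (Set.Ici 0)) {u t : ℝ} (hu : 0 ≤ u) (hut : u ≤ t) :
    (∫ s in (0:ℝ)..u, h s) + (t - u) * h u ≤ ∫ s in (0:ℝ)..t, h s := by
  rw [← intervalIntegral.integral_add_adjacent_intervals (my_intInt hm le_rfl hu)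
    (my_intInt hm hu hut)]
  have : (t - u) * h u ≤ ∫ s in u..t, h s := by
    have := intervalIntegral.integral_mono_on hut (intervalIntegrable_const (c := h u))
      (my_intInt hm hu hut) (fun x hx => hm (Set.mem_Ici.2 hu) (le_trans hu hx.1) hx.1)
    simpa using this
  linarith

lemma my_primitive_nonneg (h0 : ∀ s, 0 ≤ s → 0 ≤ h s) {t : ℝ} (ht : 0 ≤ t) :
    0 ≤ ∫ s in (0:ℝ)..t, h s :=
  intervalIntegral.integral_nonneg ht (fun u hu => h0 u hu.1)

lemma my_primitive_le (hm : MonotoneOn h (Set.Ici 0)) {t : ℝ} (ht : 0 ≤ t) :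
    (∫ s in (0:ℝ)..t, h s) ≤ t * h t := by
  have := intervalIntegral.integral_mono_on ht (my_intInt hm le_rfl ht)
    (intervalIntegrable_const (c := h t)) (fun x hx => hm hx.1 ht hx.2)
  simpa using this

end helpers

section nfun
variable {Φ Φ' : ℝ → ℝ} {D : ℝ}

lemma my_deriv_nonneg (hN : IsNFunction Φ Φ') : ∀ t, 0 ≤ t → 0 ≤ Φ' t := by
  intro t ht
  rcases eq_or_lt_of_le ht with h | h
  · rw [← h, hN.deriv_zero]
  · exact (hN.deriv_pos t h).le

lemma my_doubling (hN : IsNFunction Φ Φ') (hΔ : Delta2 Φ D) (hD : 0 < D)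
    {s : ℝ} (hs : 0 < s) : Φ' (2 * s) ≤ D ^ 2 / 2 * Φ' s := by
  have k1 : ∀ r : ℝ, 0 < r → r * Φ' r ≤ Φ (2 * r) := by
    intro r hr
    rw [hN.eq_integral (2 * r) (by positivity)]
    have := my_le_primitive hN.deriv_mono hr.le (by linarith : r ≤ 2 * r)
    have h0 := my_primitive_nonneg (my_deriv_nonneg hN) hr.le
    have : (2 * r - r) * Φ' r ≤ ∫ s in (0:ℝ)..(2*r), Φ' s := by linarith
    linarith [this]
  have k2 : Φ s ≤ s * Φ' s := by
    rw [hN.eq_integral s hs.le]; exact my_primitive_le hN.deriv_mono hs.le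
  have c1 := k1 (2 * s) (by positivity)
  have c2 := hΔ (2 * s) (by positivity)
  rw [show 2 * (2 * s) = 2 * 2 * s by ring] at c2
  have c3 := hΔ s hs
  rw [show 2 * (2 * s) = 2 * 2 * s by ring] at c1
  have : 2 * s * Φ' (2 * s) ≤ D ^ 2 * (s * Φ' s) := by nlinarith
  nlinarith

lemma my_deriv_scale (hN : IsNFunction Φ Φ') (hΔ : Delta2 Φ D) (hD : 0 < D) (n : ℕ)
    {s : ℝ} (hs : 0 < s) :
    Φ' (2 ^ n * s) ≤ (max (D ^ 2 / 2) 1) ^ n * Φ' s := by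
  induction n with
  | zero => simp
  | succ n ih =>
    have h2n : (0:ℝ) < 2 ^ n * s := by positivity
    have := my_doubling hN hΔ hD h2n
    rw [show (2:ℝ) ^ (n+1) * s = 2 * (2 ^ n * s) by ring]
    have hK : D ^ 2 / 2 ≤ max (D ^ 2 / 2) 1 := le_max_left _ _
    have hΦn : 0 ≤ Φ' (2 ^ n * s) := my_deriv_nonneg hN _ h2n.le
    have hK0 : (0:ℝ) ≤ max (D ^ 2 / 2) 1 := le_trans zero_le_one (le_max_right _ _)
    calc Φ' (2 * (2 ^ n * s)) ≤ D ^ 2 / 2 * Φ' (2 ^ n * s) := this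
      _ ≤ max (D ^ 2 / 2) 1 * Φ' (2 ^ n * s) := by nlinarith
      _ ≤ max (D ^ 2 / 2) 1 * ((max (D ^ 2 / 2) 1) ^ n * Φ' s) := by nlinarith
      _ = (max (D ^ 2 / 2) 1) ^ (n + 1) * Φ' s := by ring

lemma my_deriv_scale' (hN : IsNFunction Φ Φ') (hΔ : Delta2 Φ D) (hD : 0 < D)
    {c : ℝ} {n : ℕ} (hc : 0 ≤ c) (hcn : c ≤ 2 ^ n) {s : ℝ} (hs : 0 < s) :
    Φ' (c * s) ≤ (max (D ^ 2 / 2) 1) ^ n * Φ' s :=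
  le_trans (hN.deriv_mono (Set.mem_Ici.2 (by positivity)) (Set.mem_Ici.2 (by positivity))
    (by nlinarith : c * s ≤ 2 ^ n * s)) (my_deriv_scale hN hΔ hD n hs)

end nfun

section shift
variable {Φ Φ' : ℝ → ℝ} {D : ℝ}

lemma my_shiftDeriv_nonneg (hN : IsNFunction Φ Φ') {a : ℝ} (ha : 0 ≤ a) :
    ∀ t, 0 ≤ t → 0 ≤ shiftDeriv Φ' a t := by
  intro t ht
  have := my_deriv_nonneg hN (a + t) (by linarith)
  have : (0:ℝ) ≤ t / (a + t) := by positivity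
  unfold shiftDeriv
  have := my_deriv_nonneg hN (a + t) (by linarith)
  positivity

lemma my_shiftDeriv_mono (hN : IsNFunction Φ Φ') {a : ℝ} (ha : 0 ≤ a) :
    MonotoneOn (shiftDeriv Φ' a) (Set.Ici 0) := by
  intro s hs t ht hst
  simp only [Set.mem_Ici] at hs ht
  rcases eq_or_lt_of_le hs with h | h
  · have : shiftDeriv Φ' a s = 0 := by
      unfold shiftDeriv; rw [← h]; simp
    rw [this]
    exact my_shiftDeriv_nonneg hN ha t ht
  · have hat : 0 < a + t := by linarith
    have has : 0 < a + s := by linarith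
    unfold shiftDeriv
    have h1 : s / (a + s) ≤ t / (a + t) := by
      rw [div_le_div_iff₀ has hat]; nlinarith
    have h2 : Φ' (a + s) ≤ Φ' (a + t) :=
      hN.deriv_mono (Set.mem_Ici.2 (by linarith)) (Set.mem_Ici.2 (by linarith)) (by linarith)
    have h3 : 0 ≤ Φ' (a + s) := my_deriv_nonneg hN _ (by linarith)
    have h4 : (0:ℝ) ≤ s / (a + s) := by positivity
    nlinarith

lemma my_shiftN_nonneg (hN : IsNFunction Φ Φ') {a : ℝ} (ha : 0 ≤ a) {t : ℝ} (ht : 0 ≤ t) :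
    0 ≤ shiftN Φ' a t :=
  my_primitive_nonneg (my_shiftDeriv_nonneg hN ha) ht

lemma my_shiftN_mono (hN : IsNFunction Φ Φ') {a : ℝ} (ha : 0 ≤ a) :
    MonotoneOn (shiftN Φ' a) (Set.Ici 0) := by
  intro s hs t ht hst
  have := my_le_primitive (my_shiftDeriv_mono hN ha) (Set.mem_Ici.1 hs) hst
  have h0 := my_shiftDeriv_nonneg hN ha s (Set.mem_Ici.1 hs)
  unfold shiftN
  nlinarith

lemma my_shiftN_linear (hN : IsNFunction Φ Φ') {a : ℝ} (ha : 0 ≤ a) {b t : ℝ}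
    (hb : 0 < b) (hbt : b ≤ t) : shiftN Φ' a b / b * t ≤ shiftN Φ' a t := by
  have h1 := my_le_primitive (my_shiftDeriv_mono hN ha) hb.le hbt
  have h2 : shiftN Φ' a b ≤ b * shiftDeriv Φ' a b :=
    my_primitive_le (my_shiftDeriv_mono hN ha) hb.le
  have h3 : 0 ≤ shiftN Φ' a b := my_shiftN_nonneg hN ha hb.le
  rw [div_mul_eq_mul_div, div_le_iff₀ hb]
  unfold shiftN at *
  nlinarith

lemma my_shiftN_scale (hN : IsNFunction Φ Φ') (hΔ : Delta2 Φ D) (hD : 0 < D)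
    {a : ℝ} (ha : 0 ≤ a) {lam : ℝ} {n : ℕ} (hlam : 1 ≤ lam) (hn : 2 * lam ≤ 2 ^ n)
    {t : ℝ} (ht : 0 < t) :
    shiftN Φ' a (lam * t) ≤ 4 * lam ^ 2 * (max (D ^ 2 / 2) 1) ^ n * shiftN Φ' a t := by
  set K : ℝ := (max (D ^ 2 / 2) 1) ^ n with hKdef
  have hK1 : (1:ℝ) ≤ K := one_le_pow₀ (le_max_right _ _)
  set P : ℝ := Φ' ((a + t) / 2) with hP
  have hP0 : 0 ≤ P := my_deriv_nonneg hN _ (by positivity)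
  have hat : 0 < a + t := by linarith
  -- upper bound for shiftN at lam * t
  have u1 : shiftN Φ' a (lam * t) ≤ lam * t * shiftDeriv Φ' a (lam * t) :=
    my_primitive_le (my_shiftDeriv_mono hN ha) (by positivity)
  have u2 : Φ' (a + lam * t) ≤ K * P := by
    have h1 : Φ' (a + lam * t) ≤ Φ' ((2 * lam) * ((a + t) / 2)) := by
      apply hN.deriv_mono (Set.mem_Ici.2 (by positivity)) (Set.mem_Ici.2 (by positivity))
      nlinarith
    have h2 := my_deriv_scale' hN hΔ hD (by linarith : (0:ℝ) ≤ 2 * lam) hn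
      (by positivity : (0:ℝ) < (a + t) / 2)
    exact le_trans h1 h2
  have u3 : shiftDeriv Φ' a (lam * t) ≤ lam * t / (a + t) * (K * P) := by
    unfold shiftDeriv
    have halt : 0 < a + lam * t := by nlinarith
    have hd : lam * t / (a + lam * t) ≤ lam * t / (a + t) := by
      apply div_le_div_of_nonneg_left (by positivity) hat
      nlinarith
    have hΦ0 : 0 ≤ Φ' (a + lam * t) := my_deriv_nonneg hN _ (by positivity)
    have hq : (0:ℝ) ≤ lam * t / (a + lam * t) := by positivity
    nlinarith
  have upper : shiftN Φ' a (lam * t) ≤ lam ^ 2 * t ^ 2 / (a + t) * (K * P) := by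
    calc shiftN Φ' a (lam * t) ≤ lam * t * shiftDeriv Φ' a (lam * t) := u1
      _ ≤ lam * t * (lam * t / (a + t) * (K * P)) := by
          apply mul_le_mul_of_nonneg_left u3 (by positivity)
      _ = lam ^ 2 * t ^ 2 / (a + t) * (K * P) := by ring
  -- lower bound for shiftN at t
  have l1 : (t - t / 2) * shiftDeriv Φ' a (t / 2) ≤ shiftN Φ' a t := by
    have := my_le_primitive (my_shiftDeriv_mono hN ha) (by positivity : (0:ℝ) ≤ t / 2)
      (by linarith : t / 2 ≤ t)
    have h0 := my_primitive_nonneg (my_shiftDeriv_nonneg hN ha) (by positivity : (0:ℝ) ≤ t/2)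
    unfold shiftN at *
    nlinarith
  have l2 : t ^ 2 / (4 * (a + t)) * P ≤ shiftN Φ' a t := by
    have hd2 : 0 < a + t / 2 := by linarith
    have hPle : P ≤ Φ' (a + t / 2) := by
      apply hN.deriv_mono (Set.mem_Ici.2 (by positivity)) (Set.mem_Ici.2 (by positivity))
      linarith
    have hdd : t / 2 / (a + t) ≤ t / 2 / (a + t / 2) := by
      apply div_le_div_of_nonneg_left (by positivity) hd2
      linarith
    have : t ^ 2 / (4 * (a + t)) * P ≤ (t - t / 2) * shiftDeriv Φ' a (t / 2) := by
      unfold shiftDeriv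
      have e1 : t ^ 2 / (4 * (a + t)) * P = (t - t / 2) * (t / 2 / (a + t) * P) := by
        field_simp; ring
      rw [e1]
      apply mul_le_mul_of_nonneg_left _ (by linarith : (0:ℝ) ≤ t - t / 2)
      have hq : (0:ℝ) ≤ t / 2 / (a + t) := by positivity
      nlinarith
    linarith
  -- combine
  have key : lam ^ 2 * t ^ 2 / (a + t) * (K * P) =
      4 * lam ^ 2 * K * (t ^ 2 / (4 * (a + t)) * P) := by
    field_simp
  have hc : (0:ℝ) ≤ 4 * lam ^ 2 * K := by positivity
  calc shiftN Φ' a (lam * t) ≤ lam ^ 2 * t ^ 2 / (a + t) * (K * P) := upper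
    _ = 4 * lam ^ 2 * K * (t ^ 2 / (4 * (a + t)) * P) := key
    _ ≤ 4 * lam ^ 2 * K * shiftN Φ' a t := mul_le_mul_of_nonneg_left l2 hc

end shift


set_option maxHeartbeats 1000000 in
/-- abstract orthotropic Orlicz stability: if `|g| ≤ M ⨍_T |g|`
a.e. on `T` (inverse estimate) and `⨍_T |g| ≤ M' ⨍_N |f|`, then
`⨍_T φ_a(|g|) ≤ C ⨍_N φ_a(|f|)` for all shifts `a ≥ 0`, with `C` depending only on
`D, M, M'` (averages of `φ_a`-values taken in `[0,∞]`). -/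
theorem statement10 (D M M' : ℝ) (hD : 0 < D) (hM : 0 < M) (hM' : 0 < M') :
    ∃ Cst : ℝ, 0 < Cst ∧
      ∀ (Φ Φ' : ℝ → ℝ),
        IsNFunction Φ Φ' →
        Delta2 Φ D →
        Delta2 (complementary Φ') D →
        ∀ (d : ℕ) (T N : Set (Fin d → ℝ)) (g f : (Fin d → ℝ) → ℝ),
          MeasurableSet T → MeasurableSet N → T ⊆ N →
          0 < volume T → volume N < ⊤ →
          Measurable g → Measurable f →
          IntegrableOn g T → IntegrableOn f N →
          (∀ᵐ x ∂volume.restrict T,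
            |g x| ≤ M * ((volume T).toReal⁻¹ * ∫ y in T, |g y|)) →
          ((volume T).toReal⁻¹ * ∫ y in T, |g y|) ≤
            M' * ((volume N).toReal⁻¹ * ∫ y in N, |f y|) →
          ∀ a : ℝ, 0 ≤ a →
            (∫⁻ x in T, ENNReal.ofReal (shiftN Φ' a |g x|)) / volume T ≤
              ENNReal.ofReal Cst *
                ((∫⁻ x in N, ENNReal.ofReal (shiftN Φ' a |f x|)) / volume N) := by
  set K : ℝ := max (D ^ 2 / 2) 1 with hKdef
  have hK1 : (1:ℝ) ≤ K := le_max_right _ _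
  obtain ⟨nM, hnM⟩ := pow_unbounded_of_one_lt (2 * (M + 1)) (one_lt_two (α := ℝ))
  obtain ⟨nM', hnM'⟩ := pow_unbounded_of_one_lt (2 * (M' + 1)) (one_lt_two (α := ℝ))
  set CM : ℝ := 4 * (M + 1) ^ 2 * K ^ nM with hCMdef
  set CM' : ℝ := 4 * (M' + 1) ^ 2 * K ^ nM' with hCM'def
  set C2 : ℝ := 4 * 2 ^ 2 * K ^ 2 with hC2def
  have hCM0 : 0 < CM := by positivity
  have hCM'0 : 0 < CM' := by positivity
  have hC20 : 0 < C2 := by positivity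
  refine ⟨CM * CM' * C2, by positivity, ?_⟩
  intro Φ Φ' hN hΔ _hΔc d T N g f hTm hNm hTN hT0 hNfin hgm hfm hgi hfi hinv hcomp a ha
  set Cst : ℝ := CM * CM' * C2 with hCstdef
  have hCst0 : 0 < Cst := by positivity
  set gbar : ℝ := (volume T).toReal⁻¹ * ∫ y in T, |g y| with hgbar
  set mbar : ℝ := (volume N).toReal⁻¹ * ∫ y in N, |f y| with hmbar
  have hTfin : volume T ≠ ⊤ := ((measure_mono hTN).trans_lt hNfin).ne
  have hT0' : volume T ≠ 0 := hT0.ne'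
  have hN0 : volume N ≠ 0 := fun h => hT0.ne' (le_antisymm (h ▸ measure_mono hTN) zero_le)
  have hNfin' : volume N ≠ ⊤ := hNfin.ne
  -- measurability of the composed functions
  have Gmono : Monotone (fun t : ℝ => shiftN Φ' a (max t 0)) := by
    intro t₁ t₂ h12
    exact my_shiftN_mono hN ha (Set.mem_Ici.2 (le_max_right _ _))
      (Set.mem_Ici.2 (le_max_right _ _)) (max_le_max h12 le_rfl)
  have Gmeas : Measurable (fun t : ℝ => shiftN Φ' a (max t 0)) := Gmono.measurable
  have hmeasf : Measurable (fun x : (Fin d → ℝ) => ENNReal.ofReal (shiftN Φ' a |f x|)) := by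
    have : (fun x : (Fin d → ℝ) => ENNReal.ofReal (shiftN Φ' a |f x|)) =
        (fun x => ENNReal.ofReal (shiftN Φ' a (max |f x| 0))) := by
      funext x; rw [max_eq_left (abs_nonneg _)]
    rw [this]
    exact ENNReal.measurable_ofReal.comp (Gmeas.comp hfm.abs)
  -- sign of gbar
  have hgbar_nonneg : 0 ≤ gbar := by
    apply mul_nonneg (inv_nonneg.2 ENNReal.toReal_nonneg)
    exact integral_nonneg (fun y => abs_nonneg _)
  rcases eq_or_lt_of_le hgbar_nonneg with hg0 | hgbar_pos
  · -- gbar = 0 : left side vanishes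
    have hz : ∀ᵐ x ∂volume.restrict T, ENNReal.ofReal (shiftN Φ' a |g x|) = 0 := by
      filter_upwards [hinv] with x hx
      have : |g x| = 0 := le_antisymm (by rw [← hg0] at hx; linarith) (abs_nonneg _)
      rw [this]
      simp [shiftN, intervalIntegral.integral_same]
    rw [lintegral_congr_ae hz, lintegral_zero, ENNReal.zero_div]
    exact zero_le
  · -- gbar > 0
    have hmpos : 0 < mbar := by nlinarith
    set b : ℝ := mbar / 2 with hbdef
    have hb : 0 < b := by positivity
    have hSb : 0 ≤ shiftN Φ' a b := my_shiftN_nonneg hN ha hb.le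
    -- pointwise upper bound on T
    have key_pt : ∀ x : (Fin d → ℝ), |g x| ≤ M * gbar →
        shiftN Φ' a |g x| ≤ Cst * shiftN Φ' a b := by
      intro x hx
      have s1 : shiftN Φ' a |g x| ≤ shiftN Φ' a ((M + 1) * gbar) :=
        my_shiftN_mono hN ha (Set.mem_Ici.2 (abs_nonneg _))
          (Set.mem_Ici.2 (by positivity)) (by nlinarith)
      have s2 : shiftN Φ' a ((M + 1) * gbar) ≤ CM * shiftN Φ' a gbar :=
        my_shiftN_scale hN hΔ hD ha (by linarith) hnM.le hgbar_pos
      have s3 : shiftN Φ' a gbar ≤ shiftN Φ' a ((M' + 1) * mbar) :=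
        my_shiftN_mono hN ha (Set.mem_Ici.2 hgbar_nonneg)
          (Set.mem_Ici.2 (by positivity)) (by nlinarith)
      have s4 : shiftN Φ' a ((M' + 1) * mbar) ≤ CM' * shiftN Φ' a mbar :=
        my_shiftN_scale hN hΔ hD ha (by linarith) hnM'.le hmpos
      have s5 : shiftN Φ' a mbar ≤ C2 * shiftN Φ' a b := by
        have : mbar = 2 * b := by rw [hbdef]; ring
        rw [this]
        exact my_shiftN_scale hN hΔ hD ha one_le_two (by norm_num) hb
      calc shiftN Φ' a |g x| ≤ CM * shiftN Φ' a gbar := s1.trans s2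
        _ ≤ CM * (CM' * shiftN Φ' a mbar) := by
            apply mul_le_mul_of_nonneg_left (s3.trans s4) hCM0.le
        _ ≤ CM * (CM' * (C2 * shiftN Φ' a b)) := by
            apply mul_le_mul_of_nonneg_left _ hCM0.le
            exact mul_le_mul_of_nonneg_left s5 hCM'0.le
        _ = Cst * shiftN Φ' a b := by rw [hCstdef]; ring
    -- LHS bound
    have lhs_le : (∫⁻ x in T, ENNReal.ofReal (shiftN Φ' a |g x|)) / volume T ≤
        ENNReal.ofReal (Cst * shiftN Φ' a b) := by
      apply ENNReal.div_le_of_le_mul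
      have : (∫⁻ x in T, ENNReal.ofReal (shiftN Φ' a |g x|)) ≤
          ∫⁻ _x in T, ENNReal.ofReal (Cst * shiftN Φ' a b) := by
        apply lintegral_mono_ae
        filter_upwards [hinv] with x hx
        exact ENNReal.ofReal_le_ofReal (key_pt x hx)
      rw [setLIntegral_const] at this
      exact this
    -- RHS lower bound
    set S : Set (Fin d → ℝ) := N ∩ {x | b ≤ |f x|} with hSdef
    have hSmeas : MeasurableSet S := hNm.inter (measurableSet_le measurable_const hfm.abs)
    have hintf : IntegrableOn (fun y => |f y|) N := hfi.abs
    have hNt0 : 0 < (volume N).toReal := ENNReal.toReal_pos hN0 hNfin'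
    have intS_ge : b * (volume N).toReal ≤ ∫ y in S, |f y| := by
      have hsplit : ∫ y in N, |f y| = (∫ y in S, |f y|) + ∫ y in N \ S, |f y| := by
        conv_lhs => rw [← Set.union_diff_cancel (Set.inter_subset_left : S ⊆ N)]
        exact setIntegral_union Set.disjoint_sdiff_right (hNm.diff hSmeas)
          (hintf.mono_set Set.inter_subset_left) (hintf.mono_set Set.diff_subset)
      have hup : (∫ y in N \ S, |f y|) ≤ b * (volume (N \ S)).toReal := by
        have := setIntegral_mono_on (hintf.mono_set Set.diff_subset)
          (integrableOn_const (((measure_mono Set.diff_subset).trans_lt hNfin).ne)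
            : IntegrableOn (fun _ => b) (N \ S) volume)
          (hNm.diff hSmeas)
          (fun x hx => by
            have hxb : ¬ b ≤ |f x| := fun hc => hx.2 ⟨hx.1, hc⟩
            exact (not_le.1 hxb).le)
        rw [setIntegral_const] at this
        rw [mul_comm]
        simpa [smul_eq_mul, Measure.real] using this
      have htot : ∫ y in N, |f y| = mbar * (volume N).toReal := by
        rw [hmbar]; field_simp
      have hmono : (volume (N \ S)).toReal ≤ (volume N).toReal :=
        ENNReal.toReal_mono hNfin' (measure_mono Set.diff_subset)
      have hmb : mbar = 2 * b := by rw [hbdef]; ring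
      rw [hmb] at htot
      have hbb : b * (volume (N \ S)).toReal ≤ b * (volume N).toReal :=
        mul_le_mul_of_nonneg_left hmono hb.le
      linarith
    have rhs_ge : ENNReal.ofReal (shiftN Φ' a b) * volume N ≤
        ∫⁻ x in N, ENNReal.ofReal (shiftN Φ' a |f x|) := by
      set c : ℝ := shiftN Φ' a b / b with hcdef
      have hc0 : 0 ≤ c := by positivity
      have step1 : ENNReal.ofReal (shiftN Φ' a b) * volume N =
          ENNReal.ofReal (c * (b * (volume N).toReal)) := by
        rw [show c * (b * (volume N).toReal) = shiftN Φ' a b * (volume N).toReal by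
          rw [hcdef]; field_simp]
        rw [ENNReal.ofReal_mul hSb, ENNReal.ofReal_toReal hNfin']
      have step2 : ENNReal.ofReal (c * (b * (volume N).toReal)) ≤
          ENNReal.ofReal (c * ∫ y in S, |f y|) := by
        apply ENNReal.ofReal_le_ofReal
        exact mul_le_mul_of_nonneg_left intS_ge hc0
      have step3 : ENNReal.ofReal (c * ∫ y in S, |f y|) =
          ∫⁻ x in S, ENNReal.ofReal (c * |f x|) := by
        rw [ENNReal.ofReal_mul hc0,
          ofReal_integral_eq_lintegral_ofReal (hintf.mono_set Set.inter_subset_left)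
            (Filter.Eventually.of_forall fun x => abs_nonneg _),
          ← lintegral_const_mul _ (hfm.abs.ennreal_ofReal)]
        exact lintegral_congr fun x => (ENNReal.ofReal_mul hc0).symm
      have step4 : (∫⁻ x in S, ENNReal.ofReal (c * |f x|)) ≤
          ∫⁻ x in S, ENNReal.ofReal (shiftN Φ' a |f x|) := by
        apply setLIntegral_mono hmeasf
        intro x hx
        apply ENNReal.ofReal_le_ofReal
        exact my_shiftN_linear hN ha hb hx.2
      have step5 : (∫⁻ x in S, ENNReal.ofReal (shiftN Φ' a |f x|)) ≤
          ∫⁻ x in N, ENNReal.ofReal (shiftN Φ' a |f x|) :=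
        lintegral_mono_set Set.inter_subset_left
      calc ENNReal.ofReal (shiftN Φ' a b) * volume N
          = ENNReal.ofReal (c * (b * (volume N).toReal)) := step1
        _ ≤ ENNReal.ofReal (c * ∫ y in S, |f y|) := step2
        _ = ∫⁻ x in S, ENNReal.ofReal (c * |f x|) := step3
        _ ≤ ∫⁻ x in S, ENNReal.ofReal (shiftN Φ' a |f x|) := step4
        _ ≤ ∫⁻ x in N, ENNReal.ofReal (shiftN Φ' a |f x|) := step5
    -- combine
    refine lhs_le.trans ?_
    rw [ENNReal.ofReal_mul hCst0.le]
    apply mul_le_mul_of_nonneg_left _ zero_le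
    rw [ENNReal.le_div_iff_mul_le (Or.inl hN0) (Or.inl hNfin')]
    exact rhs_ge
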